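/- The logarithm map is odd with respect to inversion: for any x ∈ M with x₀² + x₁² = 1, Log_𝟙(x⁻¹) = -Log_𝟙(x), where x⁻¹ = [x₀, -x₁, -x₂, -x₃]ᵀ. -/

import Mathlib

open Real

/-- Four-quadrant arctangent: `arctan2 y x ∈ (-π, π]` is the argument of `x + y i`. -/
noncomputable def arctan2 (y x : ℝ) : ℝ := Complex.arg (Complex.mk x y)

/-- The angle-wrapping function mapping into `(-π/2, π/2]`. -/
noncomputable def wrap (α : ℝ) : ℝ :=
  if α ≤ -(π / 2) then α + π
  else if α > π / 2 then α - π
  else α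

/-- `sinc t = sin t / t`, with `sinc 0 = 1`. -/
noncomputable def sinc (t : ℝ) : ℝ := if t = 0 then 1 else Real.sin t / t

/-- The rotation half-angle of a PUDQ. -/
noncomputable def phi (x : Fin 4 → ℝ) : ℝ := wrap (arctan2 (x 1) (x 0))

/-- The logarithm map at the identity, `Log_𝟙 : M → ℝ³`. -/
noncomputable def Log1 (x : Fin 4 → ℝ) : Fin 3 → ℝ :=
  fun i => (1 / _root_.sinc (phi x)) * ![x 1, x 2, x 3] i

/-- Inverse of a planar unit dual quaternion. -/
noncomputable def pudqInv (x : Fin 4 → ℝ) : Fin 4 → ℝ :=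
  ![x 0, -x 1, -x 2, -x 3]

lemma sinc_neg (t : ℝ) : _root_.sinc (-t) = _root_.sinc t := by
  unfold _root_.sinc
  rcases eq_or_ne t 0 with h | h
  · simp [h]
  · rw [if_neg (neg_ne_zero.mpr h), if_neg h, Real.sin_neg, neg_div_neg_eq]

lemma sinc_wrap_neg (α : ℝ) : _root_.sinc (wrap (-α)) = _root_.sinc (wrap α) := by
  have hπ := Real.pi_pos
  unfold wrap
  split_ifs with h1 h2 h3 h4 h5 h6 h7 <;>
    first
      | linarith
      | (rw [show (-α + π : ℝ) = -(α - π) by ring]; exact _root_.sinc_neg _)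
      | (rw [show (-α - π : ℝ) = -(α + π) by ring]; exact _root_.sinc_neg _)
      | exact _root_.sinc_neg _
      | (have hα : α = -(π/2) := by linarith
         rw [hα]; ring_nf)
      | (have hα : α = π/2 := by linarith
         rw [hα]; ring_nf)

lemma sinc_phi_inv (x : Fin 4 → ℝ) : _root_.sinc (phi (pudqInv x)) = _root_.sinc (phi x) := by
  have hconj : Complex.mk (x 0) (-(x 1)) = (starRingEnd ℂ) (Complex.mk (x 0) (x 1)) := by
    simp [Complex.ext_iff]
  unfold phi arctan2 pudqInv
  simp only [Matrix.cons_val_zero, Matrix.cons_val_one, Matrix.head_cons]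
  rw [hconj, Complex.arg_conj]
  split_ifs with h
  · rw [h]
  · exact sinc_wrap_neg _

theorem log_inv_eq_neg_log (x : Fin 4 → ℝ) (hx : x 0 ^ 2 + x 1 ^ 2 = 1) :
    Log1 (pudqInv x) = -Log1 x := by
  funext i
  have hs := sinc_phi_inv x
  fin_cases i <;>
    · simp only [Log1, hs, Pi.neg_apply]
      simp [pudqInv]
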